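/- arXiv:2411.11397 — 6 statements merged into one kernel-verified Lean document; each statement's English description precedes it below -/
import Mathlib

section
/- Characterization of bipartite binary process functions: let ω : Bool × Bool → Bool × Bool be of the form ω(o₁,o₂) = (f(o₂), g(o₁)) for some f, g : Bool → Bool. Then ω is a process function — i.e., for all interventions h₁, h₂ : Bool → Bool the map (i₁,i₂) ↦ (f(h₂(i₂)), g(h₁(i₁))) has exactly one fixed point — if and only if f is constant or g is constant. -/
/-- Characterization of bipartite binary process functions: `ω(o₁,o₂) = (f o₂, g o₁)`
is a process function (unique fixed point of `(i₁,i₂) ↦ (f (h₂ i₂), g (h₁ i₁))` for all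
interventions `h₁, h₂`) iff `f` is constant or `g` is constant. -/
theorem bipartite_processFunction_iff (f g : Bool → Bool) :
    (∀ h₁ h₂ : Bool → Bool, ∃! i : Bool × Bool, (f (h₂ i.2), g (h₁ i.1)) = i) ↔
      ((∃ c : Bool, ∀ b, f b = c) ∨ (∃ c : Bool, ∀ b, g b = c)) := by
  simp only [ExistsUnique]
  revert f g; decide
end

section
/- No bipartite process function realizes the perfect GYNI correlation: there is no process function ω(o₁,o₂) = (f(o₂), g(o₁)) on Bool × Bool together with deterministic local interventions (for party k: outcome x_k = ξ_k(a_k, i_k) and output o_k = η_k(a_k, i_k), with the fixed point of the induced loop well-defined and unique) such that for all settings a₁, a₂ ∈ Bool the resulting outcomes satisfy x₁ = a₂ and x₂ = a₁. -/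
lemma bool_invol (f : Bool → Bool) (h : f false ≠ f true) : ∀ b, f (f b) = b := by
  intro b
  cases hf : f false <;> cases ht : f true <;> simp_all <;> cases b <;> simp_all

/-- No bipartite process function `ω(o₁,o₂) = (f o₂, g o₁)` together with deterministic
local interventions (outcome `x_k = ξ_k a_k i_k`, output `o_k = η_k a_k i_k`) realizes
the perfect GYNI correlation `x₁ = a₂`, `x₂ = a₁`: at the (unique, by the process-function
property) fixed point of the induced loop, the outcomes cannot satisfy GYNI for all settings. -/
theorem no_processFunction_perfect_gyni :
    ¬ ∃ (f g : Bool → Bool) (ξ₁ ξ₂ η₁ η₂ : Bool → Bool → Bool),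
        (∀ h₁ h₂ : Bool → Bool, ∃! i : Bool × Bool, (f (h₂ i.2), g (h₁ i.1)) = i) ∧
        (∀ a₁ a₂ i₁ i₂ : Bool,
          (f (η₂ a₂ i₂) = i₁ ∧ g (η₁ a₁ i₁) = i₂) →
          (ξ₁ a₁ i₁ = a₂ ∧ ξ₂ a₂ i₂ = a₁)) := by
  rintro ⟨f, g, ξ₁, ξ₂, η₁, η₂, hfix, hg⟩
  by_cases hf : f false = f true
  · -- f is constant, so i₁ = f false at every fixed point
    have hc : ∀ b, f b = f false := by intro b; cases b <;> simp [hf]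
    have key : ∀ a₂ : Bool, ξ₁ true (f false) = a₂ := by
      intro a₂
      obtain ⟨i, hi, -⟩ := hfix (η₁ true) (η₂ a₂)
      have h1 : f (η₂ a₂ i.2) = i.1 := congrArg Prod.fst hi
      have h2 : g (η₁ true i.1) = i.2 := congrArg Prod.snd hi
      have := (hg true a₂ i.1 i.2 ⟨h1, h2⟩).1
      rwa [← h1, hc (η₂ a₂ i.2)] at this
    have := (key false).symm.trans (key true)
    exact Bool.false_ne_true this
  · by_cases hgc : g false = g true
    · -- g is constant, so i₂ = g false at every fixed point
      have hc : ∀ b, g b = g false := by intro b; cases b <;> simp [hgc]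
      have key : ∀ a₁ : Bool, ξ₂ true (g false) = a₁ := by
        intro a₁
        obtain ⟨i, hi, -⟩ := hfix (η₁ a₁) (η₂ true)
        have h1 : f (η₂ true i.2) = i.1 := congrArg Prod.fst hi
        have h2 : g (η₁ a₁ i.1) = i.2 := congrArg Prod.snd hi
        have := (hg a₁ true i.1 i.2 ⟨h1, h2⟩).2
        rwa [← h2, hc (η₁ a₁ i.1)] at this
      have := (key false).symm.trans (key true)
      exact Bool.false_ne_true this
    · -- both non-constant: two fixed points for h₁ = g, h₂ = f
      have hff := bool_invol f hf
      have hgg := bool_invol g hgc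
      obtain ⟨i, -, huniq⟩ := hfix g f
      have h00 : ((false, false) : Bool × Bool) = i := by
        apply huniq; simp [hff, hgg]
      have h11 : ((true, true) : Bool × Bool) = i := by
        apply huniq; simp [hff, hgg]
      have := h00.trans h11.symm
      simp at this
end

section
/- The BFW process wins the GYNIN game perfectly: with the tripartite classical process p(i⃗|o⃗) = ½·δ_{i₁,o₃}δ_{i₂,o₁}δ_{i₃,o₂} + ½·δ_{i₁,¬o₃}δ_{i₂,¬o₁}δ_{i₃,¬o₂} on Bool³ and local interventions p(x_k,o_k|a_k,i_k) = δ_{x_k,i_k}·δ_{o_k,a_k} for each k ∈ {1,2,3}, the resulting correlation p(x⃗|a⃗) = Σ_{i⃗,o⃗} ∏_k p(x_k,o_k|a_k,i_k)·p(i⃗|o⃗) satisfies p(x⃗|a⃗) = ½·δ_{(x₁,x₂,x₃),(a₃,a₁,a₂)} + ½·δ_{(x₁,x₂,x₃),(¬a₃,¬a₁,¬a₂)}, and hence the GYNIN winning probability p_gynin = (1/8)·Σ_{x⃗,a⃗} p(x⃗|a⃗)·(δ_{x₁,a₃}δ_{x₂,a₁}δ_{x₃,a₂} + δ_{x₁,¬a₃}δ_{x₂,¬a₁}δ_{x₃,¬a₂})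 equals 1. -/
open Finset

/-- Kronecker delta on `Bool`, valued in `ℝ`. -/
noncomputable def kd (u v : Bool) : ℝ := if u = v then 1 else 0

/-- The Baumeler–Feix–Wolf classical process `p(i⃗|o⃗)`. -/
noncomputable def bfw (i₁ i₂ i₃ o₁ o₂ o₃ : Bool) : ℝ :=
  (1 / 2) * (kd i₁ o₃ * kd i₂ o₁ * kd i₃ o₂) +
  (1 / 2) * (kd i₁ (!o₃) * kd i₂ (!o₁) * kd i₃ (!o₂))

/-- The correlation obtained from the BFW process with local interventions
`p(x_k,o_k|a_k,i_k) = δ_{x_k,i_k}·δ_{o_k,a_k}`. -/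
noncomputable def bfwCorr (x₁ x₂ x₃ a₁ a₂ a₃ : Bool) : ℝ :=
  ∑ i₁ : Bool, ∑ i₂ : Bool, ∑ i₃ : Bool, ∑ o₁ : Bool, ∑ o₂ : Bool, ∑ o₃ : Bool,
    (kd x₁ i₁ * kd o₁ a₁) * (kd x₂ i₂ * kd o₂ a₂) * (kd x₃ i₃ * kd o₃ a₃) *
      bfw i₁ i₂ i₃ o₁ o₂ o₃

set_option maxHeartbeats 2000000 in
lemma corr_eq (x₁ x₂ x₃ a₁ a₂ a₃ : Bool) :
    bfwCorr x₁ x₂ x₃ a₁ a₂ a₃ =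
      (1 / 2) * (kd x₁ a₃ * kd x₂ a₁ * kd x₃ a₂) +
      (1 / 2) * (kd x₁ (!a₃) * kd x₂ (!a₁) * kd x₃ (!a₂)) := by
  cases x₁ <;> cases x₂ <;> cases x₃ <;> cases a₁ <;> cases a₂ <;> cases a₃ <;>
    simp [bfwCorr, bfw, kd, Fintype.sum_bool]

/-- The BFW process wins the GYNIN game perfectly: the resulting correlation is
`½·δ_{x⃗,(a₃,a₁,a₂)} + ½·δ_{x⃗,(¬a₃,¬a₁,¬a₂)}`, and the GYNIN winning probability
under uniformly random settings equals 1. -/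
theorem bfw_wins_gynin_perfectly :
    (∀ x₁ x₂ x₃ a₁ a₂ a₃ : Bool,
      bfwCorr x₁ x₂ x₃ a₁ a₂ a₃ =
        (1 / 2) * (kd x₁ a₃ * kd x₂ a₁ * kd x₃ a₂) +
        (1 / 2) * (kd x₁ (!a₃) * kd x₂ (!a₁) * kd x₃ (!a₂))) ∧
    (1 / 8) * (∑ x₁ : Bool, ∑ x₂ : Bool, ∑ x₃ : Bool, ∑ a₁ : Bool, ∑ a₂ : Bool, ∑ a₃ : Bool,
        bfwCorr x₁ x₂ x₃ a₁ a₂ a₃ *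
          (kd x₁ a₃ * kd x₂ a₁ * kd x₃ a₂ + kd x₁ (!a₃) * kd x₂ (!a₁) * kd x₃ (!a₂))) = 1 := by
  refine ⟨corr_eq, ?_⟩
  simp only [corr_eq, Fintype.sum_bool, kd]
  norm_num
end

section
/- The deterministic AF/BW tripartite process is a process function: define ω : Bool³ → Bool³ by ω(o₁,o₂,o₃) = (¬o₂ ∧ o₃, ¬o₃ ∧ o₁, ¬o₁ ∧ o₂) (each party's input is a monotone-style function of the other two outputs). Then for every choice of interventions h₁,h₂,h₃ : Bool → Bool, the map (i₁,i₂,i₃) ↦ ω(h₁(i₁),h₂(i₂),h₃(i₃)) has exactly one fixed point. -/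
lemma afbw_aux (a₀ a₁ b₀ b₁ c₀ c₁ : Bool) :
    ∃! i : Bool × Bool × Bool,
      ((!(cond i.2.1 b₁ b₀) && (cond i.2.2 c₁ c₀)),
       (!(cond i.2.2 c₁ c₀) && (cond i.1 a₁ a₀)),
       (!(cond i.1 a₁ a₀) && (cond i.2.1 b₁ b₀))) = i := by
  unfold ExistsUnique
  revert a₀ a₁ b₀ b₁ c₀ c₁; decide

/-- The deterministic AF/BW tripartite process
`ω (o₁,o₂,o₃) = (¬o₂ ∧ o₃, ¬o₃ ∧ o₁, ¬o₁ ∧ o₂)` is a process function: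
for every choice of interventions `h₁ h₂ h₃ : Bool → Bool`, the map
`(i₁,i₂,i₃) ↦ ω (h₁ i₁, h₂ i₂, h₃ i₃)` has exactly one fixed point. -/
theorem afbw_is_process_function (h₁ h₂ h₃ : Bool → Bool) :
    ∃! i : Bool × Bool × Bool,
      ((!(h₂ i.2.1) && h₃ i.2.2), (!(h₃ i.2.2) && h₁ i.1), (!(h₁ i.1) && h₂ i.2.1)) = i := by
  obtain ⟨a₀, a₁, ea⟩ : ∃ x y, h₁ = fun b => cond b y x :=
    ⟨_, _, funext fun b => by cases b <;> rfl⟩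
  obtain ⟨b₀, b₁, eb⟩ : ∃ x y, h₂ = fun b => cond b y x :=
    ⟨_, _, funext fun b => by cases b <;> rfl⟩
  obtain ⟨c₀, c₁, ec⟩ : ∃ x y, h₃ = fun b => cond b y x :=
    ⟨_, _, funext fun b => by cases b <;> rfl⟩
  rw [ea, eb, ec]
  exact afbw_aux a₀ a₁ b₀ b₁ c₀ c₁
end

section
/- For deterministic quasi-process functions, logical consistency under deterministic interventions equals the unique-fixed-point property: let ω : O⃗ → I⃗ be a function between finite product sets and fix deterministic interventions h_k : I_k → O_k. Then Σ_{i⃗,o⃗} δ_{i⃗,ω(o⃗)} · ∏_k δ_{o_k,h_k(i_k)} = |{ i⃗ : ω(h₁(i₁),…,h_N(i_N)) = i⃗ }|; hence the normalization Σ_{x⃗} p(x⃗|a⃗) = 1 holds for these interventions iff the map i⃗ ↦ ω(h(i⃗)) has exactly one fixed point. -/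
open Finset


/-- For deterministic quasi-process functions, logical consistency under deterministic
interventions is the unique-fixed-point property: the sum
`Σ_{i⃗,o⃗} δ_{i⃗,ω(o⃗)} ∏_k δ_{o_k,h_k(i_k)}` equals the number of fixed points of
`i⃗ ↦ ω(h₁(i₁),…,h_N(i_N))`; hence it equals 1 iff that map has exactly one fixed point. -/
theorem det_consistency_eq_unique_fixed_point {N : ℕ} (I O : Fin N → Type)
    [∀ k, Fintype (I k)] [∀ k, DecidableEq (I k)]
    [∀ k, Fintype (O k)] [∀ k, DecidableEq (O k)]
    (ω : (∀ k, O k) → (∀ k, I k)) (h : ∀ k, I k → O k) :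
    (∑ i : ∀ k, I k, ∑ o : ∀ k, O k,
        (if i = ω o then (1 : ℕ) else 0) * ∏ k, (if o k = h k (i k) then 1 else 0)) =
      (univ.filter (fun i : ∀ k, I k => ω (fun k => h k (i k)) = i)).card ∧
    ((∑ i : ∀ k, I k, ∑ o : ∀ k, O k,
        (if i = ω o then (1 : ℕ) else 0) * ∏ k, (if o k = h k (i k) then 1 else 0)) = 1 ↔
      ∃! i : ∀ k, I k, ω (fun k => h k (i k)) = i) := by
  have key : (∑ i : ∀ k, I k, ∑ o : ∀ k, O k,
        (if i = ω o then (1 : ℕ) else 0) * ∏ k, (if o k = h k (i k) then 1 else 0)) =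
      (univ.filter (fun i : ∀ k, I k => ω (fun k => h k (i k)) = i)).card := by
    have step : ∀ i : ∀ k, I k, (∑ o : ∀ k, O k,
        (if i = ω o then (1 : ℕ) else 0) * ∏ k, (if o k = h k (i k) then 1 else 0)) =
        if ω (fun k => h k (i k)) = i then 1 else 0 := by
      intro i
      have : ∀ o : ∀ k, O k,
          (if i = ω o then (1 : ℕ) else 0) * ∏ k, (if o k = h k (i k) then 1 else 0) =
          (if o = (fun k => h k (i k)) then (if i = ω o then (1:ℕ) else 0) else 0) := by
        intro o
        by_cases ho : o = fun k => h k (i k)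
        · simp [ho]
        · have : ∃ k, o k ≠ h k (i k) := by
            by_contra hc; push_neg at hc; exact ho (funext hc)
          obtain ⟨k, hk⟩ := this
          rw [Finset.prod_eq_zero (Finset.mem_univ k) (by simp [hk]), if_neg ho, mul_zero]
      rw [Finset.sum_congr rfl (fun o _ => this o),
        Finset.sum_ite_eq' Finset.univ (fun k => h k (i k))
        (fun o => if i = ω o then (1:ℕ) else 0)]
      simp [eq_comm]
    rw [Finset.sum_congr rfl (fun i _ => step i)]
    rw [Finset.card_filter]
  refine ⟨key, ?_⟩
  rw [key, Finset.card_eq_one]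
  constructor
  · rintro ⟨i, hi⟩
    have hmem : ∀ j, ω (fun k => h k (j k)) = j ↔ j ∈ ({i} : Finset _) := by
      intro j; rw [← hi]; simp
    exact ⟨i, by simpa using (hmem i).mpr (by simp), fun j hj => by simpa using (hmem j).mp hj⟩
  · rintro ⟨i, hi, huniq⟩
    exact ⟨i, Finset.eq_singleton_iff_unique_mem.mpr ⟨by simp [hi],
      fun j hj => huniq j (by simpa using hj)⟩⟩
end

section
/- Under mixtures of one-way causal deterministic strategies the bipartite GYNI winning probability is at most 1/2: for any probability distribution over strategies each of which is either of the form (x₁ = φ(a₁), x₂ = ψ(a₂,a₁)) or (x₂ = φ'(a₂), x₁ = ψ'(a₁,a₂)), the probability (1/4)·Σ_{a₁,a₂∈Bool} δ_{x₁,a₂}δ_{x₂,a₁} of winning GYNI with uniformly random settings is at most 1/2, and this bound is tight. -/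
open Finset

/-- A family of deterministic strategies `(X₁ λ, X₂ λ)` is one-way causal if for each `λ`
either party 1 is first (`x₁` depends only on `a₁`) or party 2 is first
(`x₂` depends only on `a₂`). -/
def OneWayCausal {Λ : Type} (X₁ X₂ : Λ → Bool → Bool → Bool) : Prop :=
  ∀ l : Λ,
    (∃ (φ : Bool → Bool) (ψ : Bool → Bool → Bool),
        ∀ a₁ a₂ : Bool, X₁ l a₁ a₂ = φ a₁ ∧ X₂ l a₁ a₂ = ψ a₂ a₁) ∨
    (∃ (φ' : Bool → Bool) (ψ' : Bool → Bool → Bool),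
        ∀ a₁ a₂ : Bool, X₂ l a₁ a₂ = φ' a₂ ∧ X₁ l a₁ a₂ = ψ' a₁ a₂)

lemma kd_nonneg (u v : Bool) : 0 ≤ kd u v := by unfold kd; split <;> norm_num

lemma kd_le_one (u v : Bool) : kd u v ≤ 1 := by unfold kd; split <;> norm_num

lemma kd_pair (c : Bool) (r s : ℝ) (hr : 0 ≤ r) (hr1 : r ≤ 1) (hs : 0 ≤ s) (hs1 : s ≤ 1) :
    kd c false * r + kd c true * s ≤ 1 := by
  cases c <;> simp [kd] <;> linarith

lemma strat_bound {X₁ X₂ : Bool → Bool → Bool}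
    (h : (∃ (φ : Bool → Bool) (ψ : Bool → Bool → Bool),
        ∀ a₁ a₂ : Bool, X₁ a₁ a₂ = φ a₁ ∧ X₂ a₁ a₂ = ψ a₂ a₁) ∨
      (∃ (φ' : Bool → Bool) (ψ' : Bool → Bool → Bool),
        ∀ a₁ a₂ : Bool, X₂ a₁ a₂ = φ' a₂ ∧ X₁ a₁ a₂ = ψ' a₁ a₂)) :
    (∑ a₁ : Bool, ∑ a₂ : Bool, kd (X₁ a₁ a₂) a₂ * kd (X₂ a₁ a₂) a₁) ≤ 2 := by
  rcases h with ⟨φ, ψ, hφψ⟩ | ⟨φ', ψ', hφψ⟩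
  · have : ∀ a₁ a₂ : Bool, kd (X₁ a₁ a₂) a₂ * kd (X₂ a₁ a₂) a₁
        = kd (φ a₁) a₂ * kd (ψ a₂ a₁) a₁ := by
      intro a₁ a₂; rw [(hφψ a₁ a₂).1, (hφψ a₁ a₂).2]
    simp only [this, Fintype.sum_bool]
    have h1 := kd_pair (φ false) (kd (ψ false false) false) (kd (ψ true false) false)
      (kd_nonneg _ _) (kd_le_one _ _) (kd_nonneg _ _) (kd_le_one _ _)
    have h2 := kd_pair (φ true) (kd (ψ false true) true) (kd (ψ true true) true)
      (kd_nonneg _ _) (kd_le_one _ _) (kd_nonneg _ _) (kd_le_one _ _)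
    linarith
  · have : ∀ a₁ a₂ : Bool, kd (X₁ a₁ a₂) a₂ * kd (X₂ a₁ a₂) a₁
        = kd (φ' a₂) a₁ * kd (ψ' a₁ a₂) a₂ := by
      intro a₁ a₂; rw [(hφψ a₁ a₂).1, (hφψ a₁ a₂).2]; ring
    simp only [this, Fintype.sum_bool]
    have h1 := kd_pair (φ' false) (kd (ψ' false false) false) (kd (ψ' true false) false)
      (kd_nonneg _ _) (kd_le_one _ _) (kd_nonneg _ _) (kd_le_one _ _)
    have h2 := kd_pair (φ' true) (kd (ψ' false true) true) (kd (ψ' true true) true)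
      (kd_nonneg _ _) (kd_le_one _ _) (kd_nonneg _ _) (kd_le_one _ _)
    linarith

/-- Under mixtures of one-way causal deterministic strategies, the bipartite GYNI winning
probability is at most 1/2, and this bound is tight. -/
theorem gyni_causal_bound_and_tightness :
    (∀ (Λ : Type) (_ : Fintype Λ) (q : Λ → ℝ) (X₁ X₂ : Λ → Bool → Bool → Bool),
      (∀ l, 0 ≤ q l) → (∑ l, q l) = 1 → OneWayCausal X₁ X₂ →
      (∑ l, q l * ((1 / 4) * ∑ a₁ : Bool, ∑ a₂ : Bool,
          kd (X₁ l a₁ a₂) a₂ * kd (X₂ l a₁ a₂) a₁)) ≤ 1 / 2) ∧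
    (∃ (Λ : Type) (_ : Fintype Λ) (q : Λ → ℝ) (X₁ X₂ : Λ → Bool → Bool → Bool),
      (∀ l, 0 ≤ q l) ∧ (∑ l, q l) = 1 ∧ OneWayCausal X₁ X₂ ∧
      (∑ l, q l * ((1 / 4) * ∑ a₁ : Bool, ∑ a₂ : Bool,
          kd (X₁ l a₁ a₂) a₂ * kd (X₂ l a₁ a₂) a₁)) = 1 / 2) := by
  constructor
  · intro Λ _ q X₁ X₂ hq hq1 hc
    calc (∑ l, q l * ((1 / 4) * ∑ a₁ : Bool, ∑ a₂ : Bool,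
          kd (X₁ l a₁ a₂) a₂ * kd (X₂ l a₁ a₂) a₁))
        ≤ ∑ l, q l * (1 / 2) := by
          apply Finset.sum_le_sum
          intro l _
          apply mul_le_mul_of_nonneg_left _ (hq l)
          have := strat_bound (hc l)
          linarith
      _ = 1 / 2 := by rw [← Finset.sum_mul, hq1, one_mul]
  · refine ⟨PUnit, inferInstance, fun _ => 1, fun _ a₁ _ => false, fun _ a₁ _ => a₁,
      fun _ => by norm_num, by simp, fun _ => Or.inl ⟨fun _ => false, fun _ a₁ => a₁,
        fun _ _ => ⟨rfl, rfl⟩⟩, ?_⟩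
    simp [kd, Fintype.sum_bool]
    norm_num
end
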